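/- Let φ(x) := ψ(x) + 1/(2x) - log x, where ψ = Γ'/Γ is the digamma function. Then for every real α > 0, √α · ( (γ - log(2πα))/(2α) + Σ_{n=1}^∞ φ(nα) ) = ∫_0^∞ ( √α/(t(e^{2πt} - 1)) - 2π/(√α (e^{2πt/α} - 1)(e^{2πt} - 1)) - e^{-t/α}/(2t√α) ) dt. -/

import Mathlib

open Real MeasureTheory Filter
open Set

/-- The digamma function `ψ = Γ'/Γ`. -/
noncomputable def digamma (x : ℝ) : ℝ := deriv Real.Gamma x / Real.Gamma x

/-- `φ(x) := ψ(x) + 1/(2x) - log x`. -/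
noncomputable def phi (x : ℝ) : ℝ := digamma x + 1 / (2 * x) - Real.log x


set_option maxHeartbeats 1000000

noncomputable def hfun (t : ℝ) : ℝ := 1 / (Real.exp t - 1) - 1 / t + 1 / 2

lemma exp_sub_one_pos {t : ℝ} (ht : 0 < t) : 0 < Real.exp t - 1 := by
  nlinarith [Real.add_one_le_exp t]

/-- key auxiliary inequality: `(2 - t) ≤ (t+2) * exp (-t)` for `t ≥ 0`. -/
lemma aux_ineq {t : ℝ} (ht : 0 ≤ t) : 2 - t ≤ (t + 2) * Real.exp (-t) := by
  set u : ℝ → ℝ := fun x => (x + 2) * Real.exp (-x) - (2 - x) with hu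
  have hderiv : ∀ x : ℝ, HasDerivAt u (1 - (x + 1) * Real.exp (-x)) x := by
    intro x
    have h1 : HasDerivAt (fun y : ℝ => Real.exp (-y)) (-Real.exp (-x)) x := by
      simpa using (hasDerivAt_neg x).exp
    have h2 : HasDerivAt (fun y : ℝ => (y + 2) * Real.exp (-y))
        (1 * Real.exp (-x) + (x + 2) * -Real.exp (-x)) x :=
      ((hasDerivAt_id x).add_const 2).mul h1
    have h3 : HasDerivAt (fun y : ℝ => (2 : ℝ) - y) (-1) x := by
      simpa using (hasDerivAt_id x).const_sub 2
    refine (h2.sub h3).congr_deriv ?_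
    ring
  have hmono : Monotone u := by
    apply monotone_of_deriv_nonneg
    · exact fun x => (hderiv x).differentiableAt
    · intro x
      rw [(hderiv x).deriv]
      have h4 : (x + 1) * Real.exp (-x) ≤ 1 := by
        have := Real.add_one_le_exp x
        have h5 : (x + 1) * Real.exp (-x) ≤ Real.exp x * Real.exp (-x) := by
          apply mul_le_mul_of_nonneg_right (by linarith) (Real.exp_pos _).le
        rwa [← Real.exp_add, add_neg_cancel, Real.exp_zero] at h5
      linarith
  have h0 : u 0 = 0 := by simp [hu]
  have := hmono ht
  rw [h0] at this
  simpa [hu, sub_nonneg] using this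

lemma hfun_eq {t : ℝ} (ht : 0 < t) :
    hfun t = (2 * t + (t - 2) * (Real.exp t - 1)) / (2 * t * (Real.exp t - 1)) := by
  have hE := exp_sub_one_pos ht
  rw [hfun]
  field_simp
  ring

lemma hfun_nonneg {t : ℝ} (ht : 0 < t) : 0 ≤ hfun t := by
  have hE := exp_sub_one_pos ht
  rw [hfun_eq ht]
  apply div_nonneg _ (by positivity)
  have h := aux_ineq ht.le
  have h2 : (2 - t) * Real.exp t ≤ t + 2 := by
    have := mul_le_mul_of_nonneg_right h (Real.exp_pos t).le
    rwa [mul_assoc, ← Real.exp_add, neg_add_cancel, Real.exp_zero, mul_one] at this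
  nlinarith

lemma hfun_le_half {t : ℝ} (ht : 0 < t) : hfun t ≤ 1 / 2 := by
  have hE := exp_sub_one_pos ht
  have h1 : 1 / (Real.exp t - 1) ≤ 1 / t :=
    one_div_le_one_div_of_le ht (by nlinarith [Real.add_one_le_exp t])
  rw [hfun]; linarith

lemma hfun_le_quarter {t : ℝ} (ht : 0 < t) : hfun t ≤ t / 4 := by
  have hE := exp_sub_one_pos ht
  have hcube : t + t ^ 2 / 2 + t ^ 3 / 6 ≤ Real.exp t - 1 := by
    have h := Real.sum_le_exp_of_nonneg ht.le 4
    simp [Finset.sum_range_succ] at h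
    norm_num [Nat.factorial] at h
    linarith
  have heq : t / 4 - hfun t
      = ((t ^ 2 - 2 * t + 4) * (Real.exp t - 1) - 4 * t) / (4 * t * (Real.exp t - 1)) := by
    rw [hfun]; field_simp; ring
  have hnum : 0 ≤ (t ^ 2 - 2 * t + 4) * (Real.exp t - 1) - 4 * t := by
    have hq : (0:ℝ) < t ^ 2 - 2 * t + 4 := by nlinarith [sq_nonneg (t - 1)]
    have h2 := mul_le_mul_of_nonneg_left hcube hq.le
    nlinarith [pow_nonneg ht.le 3, pow_nonneg ht.le 4, pow_nonneg ht.le 5, sq_nonneg t]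
  have : 0 ≤ t / 4 - hfun t := by rw [heq]; positivity
  linarith

lemma hfun_continuousOn : ContinuousOn hfun (Set.Ioi 0) := by
  apply ContinuousOn.add
  · apply ContinuousOn.sub
    · exact continuousOn_const.div (Real.continuous_exp.continuousOn.sub continuousOn_const)
        (fun t ht => (exp_sub_one_pos ht).ne')
    · exact continuousOn_const.div continuousOn_id (fun t ht => ne_of_gt ht)
  · exact continuousOn_const

section BasicIntegrals

lemma integrable_exp_neg_mul {c : ℝ} (hc : 0 < c) :
    IntegrableOn (fun t : ℝ => Real.exp (-(c * t))) (Set.Ioi 0) := by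
  simpa [neg_mul] using exp_neg_integrableOn_Ioi 0 hc

lemma integral_exp_neg_mul {c : ℝ} (hc : 0 < c) :
    ∫ t in Set.Ioi (0:ℝ), Real.exp (-(c * t)) = 1 / c := by
  have := MeasureTheory.integral_comp_mul_left_Ioi (fun x : ℝ => Real.exp (-x)) 0 hc
  simp only [mul_zero, integral_exp_neg_Ioi, smul_eq_mul] at this
  rw [this]
  simp

lemma integrable_mul_exp_neg_mul {c : ℝ} (hc : 0 < c) :
    IntegrableOn (fun t : ℝ => t * Real.exp (-(c * t))) (Set.Ioi 0) := by
  have hb : IntegrableOn (fun t : ℝ => (2 / c) * Real.exp (-(c / 2 * t))) (Set.Ioi 0) :=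
    (integrable_exp_neg_mul (by positivity)).const_mul _
  apply hb.mono' ?_ ?_
  · exact (continuous_id.mul (Real.continuous_exp.comp
      (continuous_const.mul continuous_id).neg)).aestronglyMeasurable.restrict
  · rw [MeasureTheory.ae_restrict_iff' measurableSet_Ioi]
    filter_upwards with t ht
    have ht' : (0:ℝ) < t := ht
    rw [Real.norm_eq_abs, abs_of_nonneg (by positivity)]
    have h1 : t ≤ (2 / c) * Real.exp (c / 2 * t) := by
      have h2 : c / 2 * t ≤ Real.exp (c / 2 * t) := by
        have := Real.add_one_le_exp (c / 2 * t); linarith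
      calc t = (2 / c) * (c / 2 * t) := by field_simp
      _ ≤ (2 / c) * Real.exp (c / 2 * t) := by
          exact mul_le_mul_of_nonneg_left h2 (by positivity)
    calc t * Real.exp (-(c * t)) ≤ ((2 / c) * Real.exp (c / 2 * t)) * Real.exp (-(c * t)) := by
          exact mul_le_mul_of_nonneg_right h1 (Real.exp_pos _).le
    _ = (2 / c) * Real.exp (-(c / 2 * t)) := by
          rw [mul_assoc, ← Real.exp_add]; ring_nf

lemma integral_mul_exp_neg_mul {c : ℝ} (hc : 0 < c) :
    ∫ t in Set.Ioi (0:ℝ), t * Real.exp (-(c * t)) = 1 / c ^ 2 := by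
  have h := Real.integral_rpow_mul_exp_neg_mul_Ioi (a := 2) (by norm_num) hc
  rw [show (2:ℝ) - 1 = 1 by norm_num] at h
  have heq : ∫ t in Set.Ioi (0:ℝ), t * Real.exp (-(c * t))
      = ∫ t in Set.Ioi (0:ℝ), t ^ (1:ℝ) * Real.exp (-(c * t)) := by
    apply MeasureTheory.setIntegral_congr_fun measurableSet_Ioi
    intro t ht
    dsimp only
    rw [Real.rpow_one]
  rw [heq, h, Real.Gamma_two, show (2:ℝ) = ((2:ℕ):ℝ) by norm_num, Real.rpow_natCast]
  ring

end BasicIntegrals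

section Frullani

lemma frullani_cont {a b : ℝ} :
    ContinuousOn (fun t : ℝ => (Real.exp (-(a*t)) - Real.exp (-(b*t))) / t) (Set.Ioi 0) := by
  apply ContinuousOn.div
  · exact ((Real.continuous_exp.comp (continuous_const.mul continuous_id).neg).sub
      (Real.continuous_exp.comp (continuous_const.mul continuous_id).neg)).continuousOn
  · exact continuousOn_id
  · exact fun t ht => ne_of_gt ht

lemma frullani_bound {a b t : ℝ} (ha : 0 < a) (hab : a ≤ b) (ht : 0 < t) :
    0 ≤ (Real.exp (-(a*t)) - Real.exp (-(b*t))) / t ∧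
    (Real.exp (-(a*t)) - Real.exp (-(b*t))) / t ≤ (b - a) * Real.exp (-(a*t)) := by
  have h1 : Real.exp (-(b*t)) ≤ Real.exp (-(a*t)) :=
    Real.exp_le_exp.2 (by nlinarith)
  constructor
  · exact div_nonneg (by linarith) ht.le
  · rw [div_le_iff₀ ht]
    have h2 : Real.exp (-(b*t)) = Real.exp (-(a*t)) * Real.exp (-((b-a)*t)) := by
      rw [← Real.exp_add]; ring_nf
    have h3 : 1 - (b-a)*t ≤ Real.exp (-((b-a)*t)) := by
      have := Real.add_one_le_exp (-((b-a)*t)); linarith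
    have h4 : Real.exp (-(a*t)) * (1 - (b-a)*t) ≤ Real.exp (-(b*t)) := by
      rw [h2]; exact mul_le_mul_of_nonneg_left h3 (Real.exp_pos _).le
    nlinarith [Real.exp_pos (-(a*t))]

lemma frullani_integrable_le {a b : ℝ} (ha : 0 < a) (hab : a ≤ b) :
    IntegrableOn (fun t : ℝ => (Real.exp (-(a*t)) - Real.exp (-(b*t))) / t) (Set.Ioi 0) := by
  apply ((integrable_exp_neg_mul ha).const_mul (b - a)).mono'
    (frullani_cont.aestronglyMeasurable measurableSet_Ioi)
  rw [MeasureTheory.ae_restrict_iff' measurableSet_Ioi]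
  filter_upwards with t ht
  obtain ⟨h0, h1⟩ := frullani_bound ha hab (Set.mem_Ioi.1 ht)
  rw [Real.norm_eq_abs, abs_of_nonneg h0]
  exact h1

lemma frullani_integrable {a b : ℝ} (ha : 0 < a) (hb : 0 < b) :
    IntegrableOn (fun t : ℝ => (Real.exp (-(a*t)) - Real.exp (-(b*t))) / t) (Set.Ioi 0) := by
  rcases le_total a b with hab | hab
  · exact frullani_integrable_le ha hab
  · refine ((frullani_integrable_le hb hab).neg).congr ?_
    apply MeasureTheory.ae_of_all
    intro t
    simp only [Pi.neg_apply]
    ring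

lemma frullani_inner {a b : ℝ} (hab : a ≤ b) {t : ℝ} (ht : 0 < t) :
    ∫ s in Set.Ioc a b, Real.exp (-(s*t)) = (Real.exp (-(a*t)) - Real.exp (-(b*t))) / t := by
  rw [← intervalIntegral.integral_of_le hab]
  have hd : ∀ s : ℝ, HasDerivAt (fun s : ℝ => -Real.exp (-(s*t))/t) (Real.exp (-(s*t))) s := by
    intro s
    have h1 : HasDerivAt (fun s : ℝ => -(s*t)) (-t) s := by
      have h := ((hasDerivAt_id' s).mul_const t).neg; rw [one_mul] at h; exact h
    have h2 := ((Real.hasDerivAt_exp (-(s*t))).comp s h1).neg.div_const t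
    refine h2.congr_deriv ?_
    field_simp
  rw [intervalIntegral.integral_eq_sub_of_hasDerivAt (fun s _ => hd s)
    ((Real.continuous_exp.comp (continuous_id.mul continuous_const).neg).intervalIntegrable a b)]
  field_simp
  ring

lemma frullani_exp_le {a b : ℝ} (ha : 0 < a) (hab : a ≤ b) :
    ∫ t in Set.Ioi (0:ℝ), (Real.exp (-(a*t)) - Real.exp (-(b*t))) / t
      = Real.log b - Real.log a := by
  have hb : 0 < b := lt_of_lt_of_le ha hab
  have hswap : Integrable (Function.uncurry fun (t s : ℝ) => Real.exp (-(s*t)))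
      ((volume.restrict (Set.Ioi 0)).prod (volume.restrict (Set.Ioc a b))) := by
    rw [MeasureTheory.integrable_prod_iff]
    · constructor
      · apply MeasureTheory.ae_of_all
        intro t
        exact (Real.continuous_exp.comp (continuous_id.mul continuous_const).neg).integrableOn_Ioc
      · apply MeasureTheory.Integrable.congr (frullani_integrable_le ha hab)
        rw [Filter.EventuallyEq, MeasureTheory.ae_restrict_iff' measurableSet_Ioi]
        filter_upwards with t ht
        rw [← frullani_inner hab (Set.mem_Ioi.1 ht)]
        refine (MeasureTheory.setIntegral_congr_fun measurableSet_Ioc fun s _ => ?_)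
        rw [Function.uncurry_apply_pair, Real.norm_eq_abs, abs_of_nonneg (Real.exp_pos _).le]
    · apply Continuous.aestronglyMeasurable
      exact Real.continuous_exp.comp (continuous_snd.mul continuous_fst).neg
  calc ∫ t in Set.Ioi (0:ℝ), (Real.exp (-(a*t)) - Real.exp (-(b*t))) / t
      = ∫ t in Set.Ioi (0:ℝ), ∫ s in Set.Ioc a b, Real.exp (-(s*t)) :=
        MeasureTheory.setIntegral_congr_fun measurableSet_Ioi
          (fun t ht => (frullani_inner hab (Set.mem_Ioi.1 ht)).symm)
    _ = ∫ s in Set.Ioc a b, ∫ t in Set.Ioi (0:ℝ), Real.exp (-(s*t)) :=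
        MeasureTheory.integral_integral_swap hswap
    _ = ∫ s in Set.Ioc a b, 1 / s :=
        MeasureTheory.setIntegral_congr_fun measurableSet_Ioc
          (fun s hs => integral_exp_neg_mul (lt_of_lt_of_le ha (le_of_lt hs.1)))
    _ = Real.log b - Real.log a := by
        rw [← intervalIntegral.integral_of_le hab, integral_one_div
          (by rw [Set.uIcc_of_le hab]; exact fun h => absurd h.1 (by linarith)),
          Real.log_div hb.ne' ha.ne']

lemma frullani_exp {a b : ℝ} (ha : 0 < a) (hb : 0 < b) :
    ∫ t in Set.Ioi (0:ℝ), (Real.exp (-(a*t)) - Real.exp (-(b*t))) / t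
      = Real.log b - Real.log a := by
  rcases le_total a b with hab | hab
  · exact frullani_exp_le ha hab
  · have h := frullani_exp_le hb hab
    have : ∫ t in Set.Ioi (0:ℝ), (Real.exp (-(a*t)) - Real.exp (-(b*t))) / t
        = -∫ t in Set.Ioi (0:ℝ), (Real.exp (-(b*t)) - Real.exp (-(a*t))) / t := by
      rw [← MeasureTheory.integral_neg]
      exact MeasureTheory.setIntegral_congr_fun measurableSet_Ioi (fun t _ => by ring)
    rw [this, h]
    ring

end Frullani

noncomputable def J (x : ℝ) : ℝ := ∫ t in Set.Ioi (0:ℝ), Real.exp (-(x * t)) * hfun t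

lemma J_integrand_aesm {x : ℝ} :
    AEStronglyMeasurable (fun t : ℝ => Real.exp (-(x * t)) * hfun t)
      (volume.restrict (Set.Ioi 0)) := by
  apply ContinuousOn.aestronglyMeasurable _ measurableSet_Ioi
  exact ((Real.continuous_exp.comp (continuous_const.mul continuous_id).neg).continuousOn).mul
    hfun_continuousOn

lemma J_integrable {x : ℝ} (hx : 0 < x) :
    IntegrableOn (fun t : ℝ => Real.exp (-(x * t)) * hfun t) (Set.Ioi 0) := by
  apply ((integrable_exp_neg_mul hx).mul_const (1/2 : ℝ)).mono' J_integrand_aesm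
  rw [MeasureTheory.ae_restrict_iff' measurableSet_Ioi]
  filter_upwards with t ht
  have ht' : (0:ℝ) < t := ht
  rw [Real.norm_eq_abs, abs_of_nonneg (mul_nonneg (Real.exp_pos _).le (hfun_nonneg ht'))]
  exact mul_le_mul_of_nonneg_left (hfun_le_half ht') (Real.exp_pos _).le

lemma J_nonneg {x : ℝ} (hx : 0 < x) : 0 ≤ J x :=
  MeasureTheory.setIntegral_nonneg measurableSet_Ioi
    (fun t ht => mul_nonneg (Real.exp_pos _).le (hfun_nonneg ht))

lemma J_le {x : ℝ} (hx : 0 < x) : J x ≤ 1 / (2 * x) := by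
  have h1 : J x ≤ ∫ t in Set.Ioi (0:ℝ), Real.exp (-(x * t)) * (1/2) := by
    apply MeasureTheory.setIntegral_mono_on (J_integrable hx)
      ((integrable_exp_neg_mul hx).mul_const _) measurableSet_Ioi
    intro t ht
    exact mul_le_mul_of_nonneg_left (hfun_le_half ht) (Real.exp_pos _).le
  rw [MeasureTheory.integral_mul_const, integral_exp_neg_mul hx] at h1
  calc J x ≤ 1 / x * (1/2) := h1
  _ = 1 / (2 * x) := by ring

lemma J_rec {x : ℝ} (hx : 0 < x) :
    J x - J (x+1) = 1 / (2*x) + 1 / (2*(x+1)) - (Real.log (x+1) - Real.log x) := by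
  have hx1 : (0:ℝ) < x + 1 := by linarith
  have key : J x - J (x+1)
      = ∫ t in Set.Ioi (0:ℝ),
          (Real.exp (-((x+1) * t))
            - (Real.exp (-(x * t)) - Real.exp (-((x+1) * t))) / t
            + (Real.exp (-(x * t)) - Real.exp (-((x+1) * t))) * (1/2)) := by
    rw [J, J, ← MeasureTheory.integral_sub (J_integrable hx) (J_integrable hx1)]
    apply MeasureTheory.setIntegral_congr_fun measurableSet_Ioi
    intro t ht
    have ht' : (0:ℝ) < t := ht
    have hE := exp_sub_one_pos ht'
    have hsplit : Real.exp (-(x * t)) = Real.exp (-((x+1) * t)) * Real.exp t := by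
      rw [← Real.exp_add]; ring_nf
    dsimp only
    rw [hfun, hsplit]
    field_simp
  rw [key, MeasureTheory.integral_add, MeasureTheory.integral_sub,
    MeasureTheory.integral_mul_const, MeasureTheory.integral_sub,
    integral_exp_neg_mul hx1, integral_exp_neg_mul hx, frullani_exp hx hx1]
  · field_simp
    ring
  · exact integrable_exp_neg_mul hx
  · exact integrable_exp_neg_mul hx1
  · exact integrable_exp_neg_mul hx1
  · exact frullani_integrable hx hx1
  · exact ((integrable_exp_neg_mul hx1).sub (frullani_integrable hx hx1))
  · exact ((integrable_exp_neg_mul hx).sub (integrable_exp_neg_mul hx1)).mul_const _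

lemma Gamma_diffAt {x : ℝ} (hx : 0 < x) : DifferentiableAt ℝ Real.Gamma x :=
  Real.differentiableAt_Gamma (fun m => by
    have : (0:ℝ) ≤ m := Nat.cast_nonneg m
    intro h; rw [h] at hx; linarith)

lemma deriv_Gamma_rec {x : ℝ} (hx : 0 < x) :
    deriv Real.Gamma (x+1) = Real.Gamma x + x * deriv Real.Gamma x := by
  have h1 : HasDerivAt (fun y : ℝ => Real.Gamma (y + 1))
      (deriv Real.Gamma (x+1) * 1) x :=
    (Gamma_diffAt (by linarith)).hasDerivAt.comp x ((hasDerivAt_id x).add_const 1)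
  have h2 : HasDerivAt (fun y : ℝ => y * Real.Gamma y)
      (1 * Real.Gamma x + x * deriv Real.Gamma x) x :=
    (hasDerivAt_id x).mul (Gamma_diffAt hx).hasDerivAt
  have heq : (fun y : ℝ => Real.Gamma (y + 1)) =ᶠ[nhds x] (fun y : ℝ => y * Real.Gamma y) := by
    filter_upwards [eventually_gt_nhds hx] with y hy
    exact Real.Gamma_add_one (ne_of_gt hy)
  have h3 := heq.deriv_eq
  rw [h1.deriv, h2.deriv] at h3
  linarith [h3]

lemma digamma_rec {x : ℝ} (hx : 0 < x) : digamma (x+1) = digamma x + 1/x := by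
  have hG := Real.Gamma_pos_of_pos hx
  rw [digamma, digamma, deriv_Gamma_rec hx, Real.Gamma_add_one hx.ne']
  field_simp
  ring

lemma deriv_logGamma {x : ℝ} (hx : 0 < x) :
    deriv (Real.log ∘ Real.Gamma) x = digamma x := by
  rw [Function.comp_def, deriv.log (Gamma_diffAt hx) (Real.Gamma_pos_of_pos hx).ne', digamma]

lemma logGamma_diffAt {x : ℝ} (hx : 0 < x) :
    DifferentiableAt ℝ (Real.log ∘ Real.Gamma) x :=
  (Gamma_diffAt hx).log (Real.Gamma_pos_of_pos hx).ne'

lemma logGamma_rec {x : ℝ} (hx : 0 < x) :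
    (Real.log ∘ Real.Gamma) (x + 1) = (Real.log ∘ Real.Gamma) x + Real.log x := by
  simp only [Function.comp_apply, Real.Gamma_add_one hx.ne',
    Real.log_mul hx.ne' (Real.Gamma_pos_of_pos hx).ne']
  ring

lemma digamma_le_log {x : ℝ} (hx : 0 < x) : digamma x ≤ Real.log x := by
  have hc := Real.convexOn_log_Gamma
  have h := hc.deriv_le_slope (Set.mem_Ioi.2 hx) (Set.mem_Ioi.2 (by linarith : (0:ℝ) < x + 1))
    (by linarith) (logGamma_diffAt hx)
  rw [deriv_logGamma hx] at h
  refine h.trans (le_of_eq ?_)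
  rw [slope_def_field, logGamma_rec hx]
  field_simp
  ring

lemma log_le_digamma {x : ℝ} (hx : 1 < x) : Real.log (x - 1) ≤ digamma x := by
  have hx0 : (0:ℝ) < x := by linarith
  have hx1 : (0:ℝ) < x - 1 := by linarith
  have hc := Real.convexOn_log_Gamma
  have h := hc.slope_le_deriv (Set.mem_Ioi.2 hx1) (Set.mem_Ioi.2 hx0)
    (by linarith) (logGamma_diffAt hx0)
  rw [deriv_logGamma hx0] at h
  refine le_trans (le_of_eq ?_) h
  rw [slope_def_field]
  have := logGamma_rec hx1
  rw [sub_add_cancel] at this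
  rw [this]
  field_simp
  ring

lemma phiJ_shift {x : ℝ} (hx : 0 < x) : phi (x + 1) + J (x + 1) = phi x + J x := by
  have h1 := J_rec hx
  have h2 : phi (x+1) - phi x = 1/(2*x) + 1/(2*(x+1)) - (Real.log (x+1) - Real.log x) := by
    rw [phi, phi, digamma_rec hx]
    field_simp
    ring
  linarith

lemma phiJ_shift_nat {x : ℝ} (hx : 0 < x) (n : ℕ) :
    phi (x + n) + J (x + n) = phi x + J x := by
  induction n with
  | zero => simp
  | succ n ih =>
    have hxn : (0:ℝ) < x + n := by positivity
    have := phiJ_shift hxn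
    rw [show x + (n:ℝ) + 1 = x + (n+1:ℕ) by push_cast; ring] at this
    rw [this, ih]

lemma tendsto_phi_add (x : ℝ) (hx : 0 < x) :
    Tendsto (fun n : ℕ => phi (x + n)) atTop (nhds 0) := by
  have hbound : ∀ n : ℕ, 1 ≤ n → |phi (x + n)| ≤ 1/(x + n - 1) + 1/(2*(x+n)) := by
    intro n hn
    have hn1 : (1:ℝ) ≤ n := by exact_mod_cast hn
    have hxn : (1:ℝ) < x + n := by linarith
    have hxn0 : (0:ℝ) < x + n := by linarith
    have h1 := digamma_le_log hxn0
    have h2 := log_le_digamma hxn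
    have h3 : Real.log (x+n) - Real.log (x+n-1) ≤ 1/(x+n-1) := by
      have hpos : (0:ℝ) < (x+n)/(x+n-1) := div_pos (by linarith) (by linarith)
      have hlog := Real.log_le_sub_one_of_pos hpos
      rw [Real.log_div (ne_of_gt (by linarith)) (ne_of_gt (by linarith))] at hlog
      have hne : x+n-1 ≠ 0 := ne_of_gt (by linarith)
      have heq : (x+n)/(x+n-1) - 1 = 1/(x+n-1) := by
        field_simp
        ring
      rw [heq] at hlog
      exact hlog
    rw [phi, abs_le]
    constructor
    · have : -(1/(x+n-1)) ≤ digamma (x+n) - Real.log (x+n) := by linarith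
      have h5 : (0:ℝ) < 1/(2*(x+n)) := by apply div_pos one_pos; linarith
      linarith
    · have h6 : (0:ℝ) < 1/(x+n-1) := div_pos one_pos (by linarith)
      have : digamma (x+n) - Real.log (x+n) ≤ 0 := by linarith
      linarith
  have htend : Tendsto (fun n : ℕ => 1/(x + n - 1) + 1/(2*(x+n))) atTop (nhds 0) := by
    have t1 : Tendsto (fun n : ℕ => x + (n:ℝ) - 1) atTop atTop :=
      tendsto_atTop_add_const_right _ _ (tendsto_atTop_add_const_left _ _
        tendsto_natCast_atTop_atTop)
    have t2 : Tendsto (fun n : ℕ => 2*(x + (n:ℝ))) atTop atTop :=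
      (tendsto_atTop_add_const_left _ _ tendsto_natCast_atTop_atTop).const_mul_atTop
        (by norm_num)
    have := (tendsto_inv_atTop_zero.comp t1).add (tendsto_inv_atTop_zero.comp t2)
    simpa [one_div, Function.comp] using this
  have hzero : Tendsto (fun _ : ℕ => (0:ℝ)) atTop (nhds 0) := tendsto_const_nhds
  apply squeeze_zero_norm' _ htend
  filter_upwards [eventually_ge_atTop 1] with n hn
  exact hbound n hn

lemma tendsto_J_add (x : ℝ) (hx : 0 < x) :
    Tendsto (fun n : ℕ => J (x + n)) atTop (nhds 0) := by
  have htend : Tendsto (fun n : ℕ => 1/(2*(x+(n:ℝ)))) atTop (nhds 0) := by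
    have t2 : Tendsto (fun n : ℕ => 2*(x + (n:ℝ))) atTop atTop :=
      (tendsto_atTop_add_const_left _ _ tendsto_natCast_atTop_atTop).const_mul_atTop
        (by norm_num)
    have h := tendsto_inv_atTop_zero.comp t2
    exact h.congr (fun n => by simp [Function.comp, one_div])
  apply squeeze_zero_norm' _ htend
  filter_upwards with n
  have hxn : (0:ℝ) < x + n := by positivity
  rw [Real.norm_eq_abs, abs_of_nonneg (J_nonneg hxn)]
  exact J_le hxn

theorem phi_eq_neg_J {x : ℝ} (hx : 0 < x) : phi x = -J x := by
  have h1 : Tendsto (fun n : ℕ => phi (x + n) + J (x + n)) atTop (nhds 0) := by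
    simpa using (tendsto_phi_add x hx).add (tendsto_J_add x hx)
  have h2 : (fun n : ℕ => phi (x + n) + J (x + n)) = fun _ : ℕ => phi x + J x := by
    funext n; exact phiJ_shift_nat hx n
  rw [h2] at h1
  have := tendsto_nhds_unique h1 tendsto_const_nhds
  linarith

lemma gamma_eq_J : Real.eulerMascheroniConstant = J 1 + 1/2 := by
  have hphi1 : phi 1 = -J 1 := phi_eq_neg_J one_pos
  have hd : digamma 1 = -Real.eulerMascheroniConstant := by
    rw [digamma, Real.Gamma_one, div_one, Real.eulerMascheroniConstant_eq_neg_deriv, neg_neg]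
  rw [phi, hd] at hphi1
  simp only [Real.log_one, mul_one] at hphi1
  linarith

lemma K_integrable : IntegrableOn
    (fun t : ℝ => 1/(Real.exp t - 1) - Real.exp (-t)/t) (Set.Ioi 0) := by
  apply MeasureTheory.Integrable.congr
    ((J_integrable one_pos).add ((integrable_exp_neg_mul one_pos).mul_const (1/2)))
  rw [Filter.EventuallyEq, MeasureTheory.ae_restrict_iff' measurableSet_Ioi]
  filter_upwards with t ht
  have ht' : (0:ℝ) < t := ht
  have hE := exp_sub_one_pos ht'
  have hexp := Real.exp_pos t
  simp only [Pi.add_apply]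
  rw [hfun, one_mul, Real.exp_neg]
  field_simp
  ring

lemma gamma_eq_integral : Real.eulerMascheroniConstant
    = ∫ t in Set.Ioi (0:ℝ), (1/(Real.exp t - 1) - Real.exp (-t)/t) := by
  rw [gamma_eq_J, J]
  have h2 : (1:ℝ)/2 = ∫ t in Set.Ioi (0:ℝ), Real.exp (-(1*t)) * (1/2) := by
    rw [MeasureTheory.integral_mul_const, integral_exp_neg_mul one_pos]
    norm_num
  rw [h2, ← MeasureTheory.integral_add (J_integrable one_pos)
    ((integrable_exp_neg_mul one_pos).mul_const (1/2))]
  apply MeasureTheory.setIntegral_congr_fun measurableSet_Ioi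
  intro t ht
  have ht' : (0:ℝ) < t := ht
  have hE := exp_sub_one_pos ht'
  have hexp := Real.exp_pos t
  dsimp only
  rw [hfun, one_mul, Real.exp_neg]
  field_simp
  ring

lemma J_le_sq {x : ℝ} (hx : 0 < x) : J x ≤ 1/(4*x^2) := by
  have h1 : J x ≤ ∫ t in Set.Ioi (0:ℝ), t * Real.exp (-(x * t)) * (1/4) := by
    apply MeasureTheory.setIntegral_mono_on (J_integrable hx)
      ((integrable_mul_exp_neg_mul hx).mul_const _) measurableSet_Ioi
    intro t ht
    have ht' : (0:ℝ) < t := ht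
    calc Real.exp (-(x*t)) * hfun t ≤ Real.exp (-(x*t)) * (t/4) :=
          mul_le_mul_of_nonneg_left (hfun_le_quarter ht') (Real.exp_pos _).le
    _ = t * Real.exp (-(x*t)) * (1/4) := by ring
  rw [MeasureTheory.integral_mul_const, integral_mul_exp_neg_mul hx] at h1
  calc J x ≤ 1/x^2 * (1/4) := h1
  _ = 1/(4*x^2) := by ring

lemma summable_J {α : ℝ} (hα : 0 < α) :
    Summable (fun n : ℕ => J (((n:ℝ)+1)*α)) := by
  have hsum : Summable (fun n : ℕ => 1 / ((n:ℝ) + 1) ^ 2) := by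
    have h := Real.summable_one_div_nat_pow.mpr one_lt_two
    have := (summable_nat_add_iff 1).mpr h
    apply this.congr
    intro n
    push_cast
    ring
  apply Summable.of_nonneg_of_le (fun n => J_nonneg (by positivity))
    (fun n => ?_) (hsum.mul_left (1/(4*α^2)))
  have hpos : (0:ℝ) < ((n:ℝ)+1)*α := by positivity
  refine (J_le_sq hpos).trans (le_of_eq ?_)
  field_simp

lemma sum_J {α : ℝ} (hα : 0 < α) :
    ∑' n : ℕ, J (((n:ℝ)+1)*α)
      = ∫ t in Set.Ioi (0:ℝ), hfun t / (Real.exp (α*t) - 1) := by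
  have key := MeasureTheory.integral_tsum_of_summable_integral_norm
    (F := fun (n : ℕ) (t : ℝ) => Real.exp (-((((n:ℝ)+1)*α) * t)) * hfun t)
    (μ := volume.restrict (Set.Ioi 0))
    (fun n => J_integrable (by positivity)) ?_
  · rw [show (fun n : ℕ => J (((n:ℝ)+1)*α))
      = fun n : ℕ => ∫ t in Set.Ioi (0:ℝ), Real.exp (-((((n:ℝ)+1)*α) * t)) * hfun t from rfl,
      key]
    apply MeasureTheory.setIntegral_congr_fun measurableSet_Ioi
    intro t ht
    have ht' : (0:ℝ) < t := ht
    have hE := exp_sub_one_pos (show (0:ℝ) < α * t by positivity)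
    have hr0 : (0:ℝ) ≤ Real.exp (-(α*t)) := (Real.exp_pos _).le
    have hr1 : Real.exp (-(α*t)) < 1 := by
      have : (0:ℝ) < α*t := by positivity
      rw [Real.exp_lt_one_iff]; linarith
    have hgeo : ∑' n : ℕ, Real.exp (-((((n:ℝ)+1)*α) * t))
        = Real.exp (-(α*t)) / (1 - Real.exp (-(α*t))) := by
      have hpow : ∀ n : ℕ, Real.exp (-((((n:ℝ)+1)*α) * t))
          = Real.exp (-(α*t)) ^ n * Real.exp (-(α*t)) := by
        intro n
        rw [← Real.exp_nat_mul, ← Real.exp_add]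
        ring_nf
      rw [tsum_congr hpow, tsum_mul_right, tsum_geometric_of_lt_one hr0 hr1]
      rw [div_eq_mul_inv, mul_comm]
    calc ∑' n : ℕ, Real.exp (-((((n:ℝ)+1)*α) * t)) * hfun t
        = (∑' n : ℕ, Real.exp (-((((n:ℝ)+1)*α) * t))) * hfun t := tsum_mul_right
      _ = Real.exp (-(α*t)) / (1 - Real.exp (-(α*t))) * hfun t := by rw [hgeo]
      _ = hfun t / (Real.exp (α*t) - 1) := by
          rw [Real.exp_neg]
          have hexp := Real.exp_pos (α*t)
          field_simp
  · apply Summable.of_nonneg_of_le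
      (fun n => MeasureTheory.integral_nonneg (fun t => norm_nonneg _))
      (fun n => ?_) (summable_J hα)
    have heq : ∫ a in Set.Ioi (0:ℝ), ‖Real.exp (-((((n:ℝ)+1)*α) * a)) * hfun a‖
        = J (((n:ℝ)+1)*α) := by
      rw [J]
      apply MeasureTheory.setIntegral_congr_fun measurableSet_Ioi
      intro t ht
      exact Real.norm_of_nonneg (mul_nonneg (Real.exp_pos _).le (hfun_nonneg ht))
    exact le_of_eq heq

lemma sum_phi {α : ℝ} (hα : 0 < α) :
    ∑' n : ℕ, phi (((n:ℝ)+1)*α)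
      = -∫ t in Set.Ioi (0:ℝ), hfun t / (Real.exp (α*t) - 1) := by
  have h1 : ∑' n : ℕ, phi (((n:ℝ)+1)*α) = ∑' n : ℕ, -J (((n:ℝ)+1)*α) :=
    tsum_congr fun n => phi_eq_neg_J (by positivity)
  rw [h1, tsum_neg, sum_J hα]

lemma Q_bound {α : ℝ} (hα : 0 < α) {t : ℝ} (ht : 0 < t) :
    hfun t / (Real.exp (α*t) - 1) ≤ (Real.exp α / α) * Real.exp (-(α*t)) := by
  have hEpos := exp_sub_one_pos (show (0:ℝ) < α*t by positivity)
  have hA := Real.exp_pos (α*t)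
  have hB := Real.exp_pos α
  rcases le_total t 1 with h1 | h1
  · have hq1 : hfun t / (Real.exp (α*t) - 1) ≤ (t/4) / (Real.exp (α*t) - 1) :=
      (div_le_div_iff_of_pos_right hEpos).2 (hfun_le_quarter ht)
    have hq2 : (t/4) / (Real.exp (α*t) - 1) ≤ (t/4)/(α*t) := by
      apply div_le_div_of_nonneg_left (by positivity) (by positivity)
      nlinarith [Real.add_one_le_exp (α*t)]
    have hq3 : (t/4)/(α*t) = 1/(4*α) := by
      field_simp
    have hq4 : (Real.exp α/α) * Real.exp (-α) ≤ (Real.exp α/α) * Real.exp (-(α*t)) := by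
      apply mul_le_mul_of_nonneg_left (Real.exp_le_exp.2 (by nlinarith)) (by positivity)
    have hq5 : (Real.exp α/α) * Real.exp (-α) = 1/α := by
      rw [Real.exp_neg]; field_simp
    have hq6 : 1/(4*α) ≤ 1/α := by
      apply one_div_le_one_div_of_le hα (by linarith)
    linarith
  · have hq1 : hfun t / (Real.exp (α*t) - 1) ≤ (1/2) / (Real.exp (α*t) - 1) :=
      (div_le_div_iff_of_pos_right hEpos).2 (hfun_le_half ht)
    have hBA : Real.exp α ≤ Real.exp (α*t) := Real.exp_le_exp.2 (by nlinarith)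
    have h1B : α + 1 ≤ Real.exp α := Real.add_one_le_exp α
    have hR : Real.exp α/α * Real.exp (-(α*t))
        = Real.exp α / (α * Real.exp (α*t)) := by
      rw [Real.exp_neg]; field_simp
    rw [hR]
    refine hq1.trans ?_
    rw [div_le_div_iff₀ hEpos (by positivity)]
    nlinarith [mul_le_mul_of_nonneg_right h1B hA.le, mul_nonneg hα.le hA.le]

lemma Q_integrable {α : ℝ} (hα : 0 < α) :
    IntegrableOn (fun t : ℝ => hfun t / (Real.exp (α*t) - 1)) (Set.Ioi 0) := by
  apply ((integrable_exp_neg_mul hα).const_mul (Real.exp α / α)).mono'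
  · apply ContinuousOn.aestronglyMeasurable _ measurableSet_Ioi
    apply hfun_continuousOn.div
    · exact ((Real.continuous_exp.comp (continuous_const.mul continuous_id)).sub
        continuous_const).continuousOn
    · exact fun t ht => (exp_sub_one_pos (mul_pos hα (Set.mem_Ioi.1 ht))).ne'
  · rw [MeasureTheory.ae_restrict_iff' measurableSet_Ioi]
    filter_upwards with t ht
    have ht' : (0:ℝ) < t := ht
    rw [Real.norm_eq_abs, abs_of_nonneg (div_nonneg (hfun_nonneg ht')
      (exp_sub_one_pos (by positivity : (0:ℝ) < α * t)).le)]
    exact Q_bound hα ht'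

noncomputable def Kfun (u : ℝ) : ℝ := 1/(Real.exp u - 1) - Real.exp (-u)/u

lemma Kfun_integrable : IntegrableOn Kfun (Set.Ioi 0) := K_integrable

lemma gamma_eq_Kfun : Real.eulerMascheroniConstant = ∫ t in Set.Ioi (0:ℝ), Kfun t :=
  gamma_eq_integral

lemma Kcomp_integrable : IntegrableOn (fun t : ℝ => Kfun (2*π*t)) (Set.Ioi 0) := by
  have := (integrableOn_Ioi_comp_mul_left_iff Kfun 0 Real.two_pi_pos).2
  simp only [mul_zero] at this
  exact this Kfun_integrable

lemma Kcomp_integral :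
    ∫ t in Set.Ioi (0:ℝ), Kfun (2*π*t) = Real.eulerMascheroniConstant / (2*π) := by
  have h := MeasureTheory.integral_comp_mul_left_Ioi Kfun 0 Real.two_pi_pos
  simp only [mul_zero, smul_eq_mul] at h
  rw [h, ← gamma_eq_Kfun]
  rw [div_eq_mul_inv, mul_comm]

/-- The `G₂` integral. -/
lemma G2_integral {α : ℝ} (hα : 0 < α) :
    (∫ t in Set.Ioi (0:ℝ),
      (π/α * (1/(Real.exp (2*π*t) - 1)) - Real.exp (-(t/α))/(2*t*α)))
    = (Real.eulerMascheroniConstant - Real.log (2*π*α)) / (2*α) := by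
  have hπ := Real.pi_pos
  have hrepr : ∀ t ∈ Set.Ioi (0:ℝ),
      π/α * (1/(Real.exp (2*π*t) - 1)) - Real.exp (-(t/α))/(2*t*α)
      = (1/(2*α)) * (2*π*(Kfun (2*π*t))
          + (Real.exp (-(2*π*t)) - Real.exp (-((1/α)*t)))/t) := by
    intro t ht
    have ht' : (0:ℝ) < t := ht
    have hE := exp_sub_one_pos (show (0:ℝ) < 2*π*t by positivity)
    have harg : -((1/α)*t) = -(t/α) := by ring
    rw [Kfun, harg]
    field_simp
    ring
  rw [MeasureTheory.setIntegral_congr_fun measurableSet_Ioi hrepr]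
  rw [MeasureTheory.integral_const_mul, MeasureTheory.integral_add
    (Kcomp_integrable.const_mul (2*π)) (frullani_integrable Real.two_pi_pos (by positivity)),
    MeasureTheory.integral_const_mul, Kcomp_integral,
    frullani_exp Real.two_pi_pos (by positivity : (0:ℝ) < 1/α)]
  have h1 : Real.log (1/α) = -Real.log α := by
    rw [one_div, Real.log_inv]
  have h2 : Real.log (2*π*α) = Real.log (2*π) + Real.log α :=
    Real.log_mul (by positivity) hα.ne'
  rw [h1, h2]
  field_simp
  ring

/-- The `G₁` integral: change of variables. -/
lemma G1_integral {α : ℝ} (hα : 0 < α) :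
    (∫ t in Set.Ioi (0:ℝ),
      (2*π/α) * (hfun (2*π*t/α) / (Real.exp (2*π*t) - 1)))
    = ∫ t in Set.Ioi (0:ℝ), hfun t / (Real.exp (α*t) - 1) := by
  have hπ := Real.pi_pos
  have hc : (0:ℝ) < 2*π/α := by positivity
  have h := MeasureTheory.integral_comp_mul_left_Ioi
    (fun s : ℝ => hfun s / (Real.exp (α*s) - 1)) 0 hc
  simp only [mul_zero, smul_eq_mul] at h
  have heq : ∀ t ∈ Set.Ioi (0:ℝ),
      (2*π/α) * (hfun (2*π*t/α) / (Real.exp (2*π*t) - 1))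
      = (2*π/α) * (hfun (2*π/α*t) / (Real.exp (α*(2*π/α*t)) - 1)) := by
    intro t ht
    have h1 : 2*π*t/α = 2*π/α*t := by ring
    have h2 : α*(2*π/α*t) = 2*π*t := by field_simp
    rw [h1, h2]
  rw [MeasureTheory.setIntegral_congr_fun measurableSet_Ioi heq,
    MeasureTheory.integral_const_mul, h]
  field_simp

lemma G1_integrable {α : ℝ} (hα : 0 < α) :
    IntegrableOn (fun t : ℝ =>
      (2*π/α) * (hfun (2*π*t/α) / (Real.exp (2*π*t) - 1))) (Set.Ioi 0) := by
  have hπ := Real.pi_pos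
  have hc : (0:ℝ) < 2*π/α := by positivity
  have h := (integrableOn_Ioi_comp_mul_left_iff
    (fun s : ℝ => hfun s / (Real.exp (α*s) - 1)) 0 hc).2
  simp only [mul_zero] at h
  have h2 := (h (Q_integrable hα)).const_mul (2*π/α)
  apply h2.congr
  rw [Filter.EventuallyEq, MeasureTheory.ae_restrict_iff' measurableSet_Ioi]
  filter_upwards with t ht
  have ht' : (0:ℝ) < t := ht
  have e1 : 2*π*t/α = 2*π/α*t := by ring
  have e2 : α*(2*π/α*t) = 2*π*t := by field_simp
  rw [e1, ← e2]

lemma G2_integrable {α : ℝ} (hα : 0 < α) :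
    IntegrableOn (fun t : ℝ =>
      (π/α * (1/(Real.exp (2*π*t) - 1)) - Real.exp (-(t/α))/(2*t*α))) (Set.Ioi 0) := by
  have hπ := Real.pi_pos
  have h := (((Kcomp_integrable.const_mul (2*π)).add
    (frullani_integrable Real.two_pi_pos (by positivity : (0:ℝ) < 1/α))).const_mul (1/(2*α)))
  apply h.congr
  rw [Filter.EventuallyEq, MeasureTheory.ae_restrict_iff' measurableSet_Ioi]
  filter_upwards with t ht
  have ht' : (0:ℝ) < t := ht
  have hE := exp_sub_one_pos (show (0:ℝ) < 2*π*t by positivity)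
  have harg : -((1/α)*t) = -(t/α) := by ring
  simp only [Pi.add_apply, Kfun]
  rw [harg]
  field_simp
  ring

lemma final_pointwise (s t : ℝ) (hs : 0 < s) (ht : 0 < t) :
    s * ((π/(s*s) * (1/(Real.exp (2*π*t) - 1)) - Real.exp (-(t/(s*s)))/(2*t*(s*s)))
      - (2*π/(s*s)) * (hfun (2*π*t/(s*s)) / (Real.exp (2*π*t) - 1)))
    = s / (t * (Real.exp (2*π*t) - 1))
      - 2*π/(s * (Real.exp (2*π*t/(s*s)) - 1) * (Real.exp (2*π*t) - 1))
      - Real.exp (-(t/(s*s))) / (2*t*s) := by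
  have hπ := Real.pi_pos
  have hE := exp_sub_one_pos (show (0:ℝ) < 2*π*t by positivity)
  have hEα := exp_sub_one_pos (show (0:ℝ) < 2*π*t/(s*s) by positivity)
  rw [hfun]
  field_simp
  ring

theorem sqrt_alpha_sum_eq_integral (α : ℝ) (hα : 0 < α) :
    Real.sqrt α * ((Real.eulerMascheroniConstant - Real.log (2 * π * α)) / (2 * α)
        + ∑' n : ℕ, phi ((n + 1) * α))
      = ∫ t in Set.Ioi (0 : ℝ),
          (Real.sqrt α / (t * (Real.exp (2 * π * t) - 1))
            - 2 * π / (Real.sqrt α * (Real.exp (2 * π * t / α) - 1) *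
                (Real.exp (2 * π * t) - 1))
            - Real.exp (-(t / α)) / (2 * t * Real.sqrt α)) := by
  have hs : 0 < Real.sqrt α := Real.sqrt_pos.2 hα
  have hss : Real.sqrt α * Real.sqrt α = α := Real.mul_self_sqrt hα.le
  rw [sum_phi hα, ← G2_integral hα, ← G1_integral hα, ← sub_eq_add_neg,
    ← MeasureTheory.integral_sub (G2_integrable hα) (G1_integrable hα),
    ← MeasureTheory.integral_const_mul]
  apply MeasureTheory.setIntegral_congr_fun measurableSet_Ioi
  intro t ht
  have ht' : (0:ℝ) < t := ht
  have key := final_pointwise (Real.sqrt α) t hs ht'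
  rw [hss] at key
  exact key
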